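/- Let h(x) = ⌊(x+1)²/3⌋ and B_m = {(x,y) ∈ ℤ×ℤ : |x| ≤ m and |y| ≤ h(m−|x|)}. Then for all k ≥ 0: |B_{3k}| = 12k³ + 12k² + 8k + 1, |B_{3k+1}| = 12k³ + 24k² + 20k + 5, and |B_{3k+2}| = 12k³ + 36k² + 40k + 15. -/

import Mathlib

/-!
For `h x = ⌊(x+1)²/3⌋` and `B_m = {(x,y) ∈ ℤ×ℤ : |x| ≤ m ∧ |y| ≤ h (m - |x|)}`:
`|B_{3k}| = 12k³ + 12k² + 8k + 1`, `|B_{3k+1}| = 12k³ + 24k² + 20k + 5`, and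
`|B_{3k+2}| = 12k³ + 36k² + 40k + 15` for all `k ≥ 0`.
-/

namespace Stmt6

/-- `h x = ⌊(x+1)²/3⌋`. -/
def hfun (x : ℕ) : ℕ := (x + 1) ^ 2 / 3

/-- The set `B_m = {(x,y) ∈ ℤ×ℤ : |x| ≤ m, |y| ≤ h(m - |x|)}`, as a `Finset`. -/
noncomputable def Bfin (h : ℕ → ℕ) (m : ℕ) : Finset (ℤ × ℤ) :=
  ((Finset.Icc (-(m : ℤ)) (m : ℤ)) ×ˢ
      (Finset.Icc (-(((Finset.range (m + 1)).sup h : ℕ) : ℤ))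
        (((Finset.range (m + 1)).sup h : ℕ) : ℤ))).filter
    (fun p => p.2.natAbs ≤ h (m - p.1.natAbs))

lemma Bfin_eq (h : ℕ → ℕ) (m : ℕ) :
    Bfin h m = (Finset.Icc (-(m : ℤ)) (m : ℤ)).biUnion
      (fun x => {x} ×ˢ Finset.Icc (-(h (m - x.natAbs) : ℤ)) ((h (m - x.natAbs) : ℤ))) := by
  ext ⟨a, b⟩
  simp only [Bfin, Finset.mem_filter, Finset.mem_product, Finset.mem_Icc,
    Finset.mem_biUnion, Finset.mem_singleton]
  constructor
  · rintro ⟨⟨⟨ha1, ha2⟩, hb⟩, hab⟩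
    exact ⟨a, ⟨ha1, ha2⟩, rfl, by omega, by omega⟩
  · rintro ⟨x, hx, rfl, hb1, hb2⟩
    have hsup : h (m - a.natAbs) ≤ (Finset.range (m + 1)).sup h :=
      Finset.le_sup (Finset.mem_range.mpr (by omega))
    exact ⟨⟨hx, by omega, by omega⟩, by omega⟩

lemma card_Bfin (h : ℕ → ℕ) (m : ℕ) :
    (Bfin h m).card = ∑ x ∈ Finset.Icc (-(m : ℤ)) (m : ℤ), (2 * h (m - x.natAbs) + 1) := by
  rw [Bfin_eq, Finset.card_biUnion]
  · refine Finset.sum_congr rfl fun x _ => ?_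
    rw [Finset.card_product, Finset.card_singleton, Int.card_Icc]
    omega
  · intro x _ y _ hxy
    simp only [Function.onFun]
    rw [Finset.disjoint_left]
    rintro ⟨a, b⟩ hab hab'
    rw [Finset.mem_product, Finset.mem_singleton] at hab hab'
    exact hxy (hab.1 ▸ hab'.1)

/-- Partial sums. -/
def T (m : ℕ) : ℕ := ∑ j ∈ Finset.range m, (2 * hfun j + 1)

lemma sum_abs (f : ℕ → ℕ) (m : ℕ) :
    ∑ x ∈ Finset.Icc (-(m : ℤ)) (m : ℤ), f x.natAbs
      = ∑ j ∈ Finset.range (m + 1), f j + ∑ j ∈ Finset.Icc 1 m, f j := by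
  have hsplit : Finset.Icc (-(m : ℤ)) (m : ℤ)
      = Finset.Icc (0 : ℤ) (m : ℤ) ∪ Finset.Icc (-(m : ℤ)) (-1) := by
    ext x; simp only [Finset.mem_Icc, Finset.mem_union]; omega
  have hdisj : Disjoint (Finset.Icc (0 : ℤ) (m : ℤ)) (Finset.Icc (-(m : ℤ)) (-1)) := by
    rw [Finset.disjoint_left]
    intro x hx hx'
    simp only [Finset.mem_Icc] at hx hx'
    omega
  rw [hsplit, Finset.sum_union hdisj]
  congr 1
  · refine Finset.sum_nbij' (fun x => x.toNat) (fun n => (n : ℤ)) ?_ ?_ ?_ ?_ ?_ <;>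
      intro a ha <;>
      simp only [Finset.mem_Icc, Finset.mem_range] at * <;> (try dsimp only at *) <;>
      first
        | omega
        | (congr 1; omega)
  · refine Finset.sum_nbij' (fun x => (-x).toNat) (fun n => -(n : ℤ)) ?_ ?_ ?_ ?_ ?_ <;>
      intro a ha <;>
      simp only [Finset.mem_Icc, Finset.mem_range] at * <;> (try dsimp only at *) <;>
      first
        | omega
        | (congr 1; omega)

lemma card_eq_T (m : ℕ) : (Bfin hfun m).card = T (m + 1) + T m := by
  rw [card_Bfin, sum_abs (fun j => 2 * hfun (m - j) + 1) m]
  unfold T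
  congr 1
  · refine Finset.sum_nbij' (fun j => m - j) (fun i => m - i) ?_ ?_ ?_ ?_ ?_ <;>
      intro a ha <;>
      simp only [Finset.mem_Icc, Finset.mem_range] at * <;> (try dsimp only at *) <;>
      first
        | omega
        | rfl
  · refine Finset.sum_nbij' (fun j => m - j) (fun i => m - i) ?_ ?_ ?_ ?_ ?_ <;>
      intro a ha <;>
      simp only [Finset.mem_Icc, Finset.mem_range] at * <;> (try dsimp only at *) <;>
      first
        | omega
        | rfl

lemma hfun0 (k : ℕ) : hfun (3 * k) = 3 * k ^ 2 + 2 * k := by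
  have h1 : (3 * k + 1) ^ 2 = 9 * k ^ 2 + 6 * k + 1 := by ring
  unfold hfun; omega

lemma hfun1 (k : ℕ) : hfun (3 * k + 1) = 3 * k ^ 2 + 4 * k + 1 := by
  have h1 : (3 * k + 1 + 1) ^ 2 = 9 * k ^ 2 + 12 * k + 4 := by ring
  unfold hfun; omega

lemma hfun2 (k : ℕ) : hfun (3 * k + 2) = 3 * k ^ 2 + 6 * k + 3 := by
  have h1 : (3 * k + 2 + 1) ^ 2 = 9 * k ^ 2 + 18 * k + 9 := by ring
  unfold hfun; omega

lemma Tsucc (m : ℕ) : T (m + 1) = T m + (2 * hfun m + 1) := Finset.sum_range_succ _ _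

lemma Tval (k : ℕ) :
    T (3 * k) = 6 * k ^ 3 + 3 * k ^ 2 + 2 * k ∧
    T (3 * k + 1) = 6 * k ^ 3 + 9 * k ^ 2 + 6 * k + 1 ∧
    T (3 * k + 2) = 6 * k ^ 3 + 15 * k ^ 2 + 14 * k + 4 := by
  induction k with
  | zero =>
    refine ⟨rfl, ?_, ?_⟩ <;> simp [T, Finset.sum_range_succ, hfun]
  | succ n ih =>
    obtain ⟨h0, h1, h2⟩ := ih
    have e0 : 3 * (n + 1) = (3 * n + 2) + 1 := by ring
    have t0 : T (3 * (n + 1)) = 6 * (n + 1) ^ 3 + 3 * (n + 1) ^ 2 + 2 * (n + 1) := by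
      rw [e0, Tsucc, h2, hfun2]; ring
    have t1 : T (3 * (n + 1) + 1) = 6 * (n + 1) ^ 3 + 9 * (n + 1) ^ 2 + 6 * (n + 1) + 1 := by
      rw [Tsucc, t0]
      have : hfun (3 * (n + 1)) = 3 * (n + 1) ^ 2 + 2 * (n + 1) := hfun0 (n + 1)
      rw [this]; ring
    have t2 : T (3 * (n + 1) + 2) = 6 * (n + 1) ^ 3 + 15 * (n + 1) ^ 2 + 14 * (n + 1) + 4 := by
      have e2 : 3 * (n + 1) + 2 = (3 * (n + 1) + 1) + 1 := by ring
      rw [e2, Tsucc, t1]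
      have : hfun (3 * (n + 1) + 1) = 3 * (n + 1) ^ 2 + 4 * (n + 1) + 1 := hfun1 (n + 1)
      rw [this]; ring
    exact ⟨t0, t1, t2⟩

/-- **Cardinality of `B_m` in each congruence class mod 3.** -/
theorem card_Bm_mod3 (k : ℕ) :
    (Bfin hfun (3 * k)).card = 12 * k ^ 3 + 12 * k ^ 2 + 8 * k + 1 ∧
    (Bfin hfun (3 * k + 1)).card = 12 * k ^ 3 + 24 * k ^ 2 + 20 * k + 5 ∧
    (Bfin hfun (3 * k + 2)).card = 12 * k ^ 3 + 36 * k ^ 2 + 40 * k + 15 := by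
  obtain ⟨h0, h1, h2⟩ := Tval k
  obtain ⟨h0', h1', h2'⟩ := Tval (k + 1)
  refine ⟨?_, ?_, ?_⟩
  · rw [card_eq_T, h0, h1]; ring
  · rw [card_eq_T, h1]
    have : 3 * k + 1 + 1 = 3 * k + 2 := rfl
    rw [this, h2]; ring
  · rw [card_eq_T, h2]
    have : 3 * k + 2 + 1 = 3 * (k + 1) := by ring
    rw [this, h0']; ring

end Stmt6
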